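/- e(3, 10; 37) ≤ 132: there exists a triangle-free simple graph on 37 vertices with exactly 132 edges in which every independent set has size at most 9. -/

import Mathlib

/-- A finset of vertices is independent in `G` if no two distinct members are adjacent. -/
def FinsetIndep {V : Type*} (G : SimpleGraph V) (s : Finset V) : Prop :=
  ∀ v ∈ s, ∀ w ∈ s, v ≠ w → ¬ G.Adj v w

namespace E310

def masks : List Nat := [43017310242, 86034620497, 34630287528, 69260575060, 5377098410, 2147485013, 4295232170, 67638612, 135275176, 34630287696, 69260574880, 1083260992, 2432868481, 4328608002, 8724851204, 17181266952, 271230976, 542461952, 1082818624, 2164605057, 4328687874, 9751822852, 17349870600, 84150288, 715657216, 1431314432, 2862612609, 5725241602, 8757776900, 18337629192, 707004432, 85966983200, 43084947536, 90464862209, 45638254594, 90194313733, 45097157642]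

def nbr (v : Fin 37) : Nat := masks.getD v.val 0

def adjB (v w : Fin 37) : Bool := (nbr v).testBit w.val

def nadjB (v w : Fin 37) : Bool := !(adjB v w && adjB w v)

def G : SimpleGraph (Fin 37) where
  Adj v w := v ≠ w ∧ adjB v w = true ∧ adjB w v = true
  symm := by
    refine ⟨?_⟩
    rintro v w ⟨h1, h2, h3⟩
    exact ⟨h1.symm, h3, h2⟩
  loopless := by refine ⟨?_⟩; rintro v ⟨h1, _⟩; exact h1 rfl

instance : DecidableRel G.Adj :=
  fun v w => inferInstanceAs (Decidable (v ≠ w ∧ adjB v w = true ∧ adjB w v = true))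

lemma adj_iff {v w : Fin 37} : G.Adj v w ↔ v ≠ w ∧ adjB v w = true ∧ adjB w v = true :=
  Iff.rfl

def srch : Nat → List (Fin 37) → Nat → Bool
  | _, _, 0 => true
  | 0, _, _+1 => false
  | _+1, [], _+1 => false
  | fuel+1, v :: rest, k+1 =>
    if rest.length < k then false
    else srch fuel (rest.filter (fun w => nadjB v w)) k || srch fuel rest (k+1)

lemma srch_complete : ∀ fuel (cand : List (Fin 37)), cand.length ≤ fuel → cand.Nodup →
    ∀ (s : Finset (Fin 37)) (k : Nat),
    (∀ x ∈ s, x ∈ cand) →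
    (∀ a ∈ s, ∀ b ∈ s, a ≠ b → nadjB a b = true) →
    k ≤ s.card → srch fuel cand k = true := by
  intro fuel
  induction fuel with
  | zero =>
    intro cand hlen hnd s k hsub hind hk
    match k with
    | 0 => rfl
    | k+1 =>
      exfalso
      have hcand : cand = [] := List.length_eq_zero_iff.mp (Nat.le_zero.mp hlen)
      subst hcand
      have hs : s = ∅ := Finset.eq_empty_of_forall_notMem (fun x hx => by
        simpa using hsub x hx)
      rw [hs] at hk; simp at hk
  | succ fuel IH =>
    intro cand hlen hnd s k hsub hind hk
    match k with
    | 0 => cases cand <;> rfl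
    | k+1 =>
      match cand with
      | [] =>
        exfalso
        have hs : s = ∅ := Finset.eq_empty_of_forall_notMem (fun x hx => by
          simpa using hsub x hx)
        rw [hs] at hk; simp at hk
      | v :: rest =>
        have hcard : s.card ≤ rest.length + 1 := by
          have hsubs : s ⊆ (v::rest).toFinset := fun x hx => List.mem_toFinset.mpr (hsub x hx)
          calc s.card ≤ (v::rest).toFinset.card := Finset.card_le_card hsubs
            _ = (v::rest).length := List.toFinset_card_of_nodup hnd
            _ = rest.length + 1 := by simp
        have hlen' : rest.length ≤ fuel := by simp at hlen; omega
        rw [srch, if_neg (by omega)]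
        rcases List.nodup_cons.mp hnd with ⟨hvr, hndr⟩
        by_cases hv : v ∈ s
        · have h1 : srch fuel (rest.filter (fun w => nadjB v w)) k = true := by
            apply IH (rest.filter (fun w => nadjB v w))
              (le_trans (List.length_filter_le _ _) hlen') (hndr.filter _) (s.erase v) k
            · intro x hx
              rcases Finset.mem_erase.mp hx with ⟨hxv, hxs⟩
              rcases List.mem_cons.mp (hsub x hxs) with h | h
              · exact absurd h hxv
              · exact List.mem_filter.mpr ⟨h, hind v hv x hxs (Ne.symm hxv)⟩
            · intro a ha b hb hab
              exact hind a (Finset.mem_of_mem_erase ha) b (Finset.mem_of_mem_erase hb) hab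
            · have := Finset.card_erase_of_mem hv
              omega
          rw [h1]; simp
        · have h2 : srch fuel rest (k+1) = true := by
            apply IH rest hlen' hndr s (k+1)
            · intro x hx
              rcases List.mem_cons.mp (hsub x hx) with h | h
              · exact absurd h (by rintro rfl; exact hv hx)
              · exact h
            · exact hind
            · exact hk
          rw [h2]; simp

set_option maxHeartbeats 4000000 in
lemma no_ten : srch 37 (List.finRange 37) 10 = false := by decide

lemma indep_bound (s : Finset (Fin 37)) (hs : FinsetIndep G s) : s.card ≤ 9 := by
  by_contra h
  have h10 : 10 ≤ s.card := by omega
  have hind : ∀ a ∈ s, ∀ b ∈ s, a ≠ b → nadjB a b = true := by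
    intro a ha b hb hab
    have hna := hs a ha b hb hab
    rw [adj_iff] at hna
    have hnadj : ¬(adjB a b = true ∧ adjB b a = true) := fun hcc => hna ⟨hab, hcc.1, hcc.2⟩
    simp only [nadjB, Bool.not_eq_true', Bool.and_eq_false_iff]
    cases h1 : adjB a b
    · exact Or.inl rfl
    · cases h2 : adjB b a
      · exact Or.inr rfl
      · exact absurd ⟨h1, h2⟩ hnadj
  have := srch_complete 37 (List.finRange 37) (by simp) (List.nodup_finRange 37) s 10
    (fun x _ => List.mem_finRange x) hind h10
  rw [no_ten] at this
  exact absurd this (by simp)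

lemma tri_mask : ∀ v w : Fin 37, adjB v w = true → nbr v &&& nbr w = 0 := by decide

lemma cliquefree : G.CliqueFree 3 := by
  intro s hs
  rw [SimpleGraph.is3Clique_iff] at hs
  obtain ⟨a, b, c, hab, hac, hbc, rfl⟩ := hs
  rw [adj_iff] at hab hac hbc
  have h0 := tri_mask b c hbc.2.1
  have hx : (nbr b).testBit a.val = true := hab.2.2
  have hy : (nbr c).testBit a.val = true := hac.2.2
  have ha : (nbr b &&& nbr c).testBit a.val = true := by
    rw [Nat.testBit_land, hx, hy]; rfl
  rw [h0] at ha
  simp at ha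

lemma degsum : (∑ v : Fin 37, G.degree v) = 264 := by decide

lemma edgecount : G.edgeSet.ncard = 132 := by
  have h2 : 2 * G.edgeFinset.card = 264 := by
    rw [← SimpleGraph.sum_degrees_eq_twice_card_edges]; exact degsum
  have h3 : G.edgeFinset.card = 132 := by omega
  rw [Set.ncard_eq_toFinset_card']
  rw [← h3]
  exact congrArg Finset.card (by ext; simp)

end E310

/-- `e(3, 10; 37) ≤ 132`: there exists a triangle-free graph on 37 vertices with exactly
132 edges in which every independent set has size at most 9. -/
theorem stmt_19 :
    ∃ G : SimpleGraph (Fin 37), G.CliqueFree 3 ∧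
      (∀ s : Finset (Fin 37), FinsetIndep G s → s.card ≤ 9) ∧
      G.edgeSet.ncard = 132 := by
  exact ⟨E310.G, E310.cliquefree, E310.indep_bound, E310.edgecount⟩
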